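/- Let d ≥ 1, λ > 0, and C > 0. Let T₁, …, T_K be nonempty finite disjoint index sets with total cardinality T = Σ_k |T_k|, and for each k and each t ∈ T_k let φ_{k,t} ∈ ℝ^d satisfy ‖φ_{k,t}‖₂ ≤ C. Define Λ₁ = λ I and Λ_{k+1} = Λ_k + Σ_{t ∈ T_k} φ_{k,t} φ_{k,t}ᵀ. Then Σ_{k=1}^K (1/|T_k|) · Σ_{t ∈ T_k} log( 1 + |T_k| · φ_{k,t}ᵀ Λ_k^{−1} φ_{k,t} ) ≤ d · log( 1 + C² T / (λ d) ). -/

import Mathlib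

open Matrix Finset

set_option maxHeartbeats 1000000

private lemma aux_one_add_sum_le_prod {α : Type*} (s : Finset α) (f : α → ℝ)
    (hf : ∀ i ∈ s, 0 ≤ f i) : 1 + ∑ i ∈ s, f i ≤ ∏ i ∈ s, (1 + f i) := by
  classical
  induction s using Finset.induction_on with
  | empty => simp
  | @insert a s ha ih =>
    rw [Finset.sum_insert ha, Finset.prod_insert ha]
    have h0 : 0 ≤ f a := hf a (Finset.mem_insert_self a s)
    have hs : ∀ i ∈ s, 0 ≤ f i := fun i hi => hf i (Finset.mem_insert_of_mem hi)
    have hsum : 0 ≤ ∑ i ∈ s, f i := Finset.sum_nonneg hs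
    calc 1 + (f a + ∑ i ∈ s, f i) ≤ (1 + f a) * (1 + ∑ i ∈ s, f i) := by nlinarith
    _ ≤ (1 + f a) * ∏ i ∈ s, (1 + f i) :=
        mul_le_mul_of_nonneg_left (ih hs) (by linarith)

private lemma aux_prod_le_pow {α : Type*} (s : Finset α) (z : α → ℝ)
    (hz : ∀ i ∈ s, 0 ≤ z i) (n : ℕ) (hn : s.card = n) (hn0 : 0 < n) :
    ∏ i ∈ s, z i ≤ ((∑ i ∈ s, z i) / n) ^ n := by
  have hne : (n : ℝ) ≠ 0 := Nat.cast_ne_zero.mpr hn0.ne'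
  have hw : ∀ i ∈ s, (0:ℝ) ≤ 1 / n := fun i _ => by positivity
  have hw' : ∑ _i ∈ s, (1:ℝ)/n = 1 := by
    rw [Finset.sum_const, hn, nsmul_eq_mul]; field_simp
  have h := Real.geom_mean_le_arith_mean_weighted s (fun _ => 1/n) z hw hw' hz
  have hL : (∏ i ∈ s, z i ^ ((1:ℝ)/n)) ^ n = ∏ i ∈ s, z i := by
    rw [← Finset.prod_pow]
    refine Finset.prod_congr rfl fun i hi => ?_
    rw [← Real.rpow_natCast (z i ^ ((1:ℝ)/n)) n, ← Real.rpow_mul (hz i hi),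
      one_div, inv_mul_cancel₀ hne, Real.rpow_one]
  have hRHS : ∑ i ∈ s, 1/(n:ℝ) * z i = (∑ i ∈ s, z i) / n := by
    rw [Finset.sum_div]
    exact Finset.sum_congr rfl fun i _ => by ring
  rw [hRHS] at h
  calc ∏ i ∈ s, z i = (∏ i ∈ s, z i ^ ((1:ℝ)/n)) ^ n := hL.symm
  _ ≤ ((∑ i ∈ s, z i) / n) ^ n := by
      apply pow_le_pow_left₀ _ h
      exact Finset.prod_nonneg fun i hi => Real.rpow_nonneg (hz i hi) _

private lemma aux_avg_log_le {α : Type*} (s : Finset α) (z : α → ℝ)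
    (hz : ∀ i ∈ s, 0 < z i) (hs : s.Nonempty) :
    (1 / (s.card : ℝ)) * ∑ i ∈ s, Real.log (z i) ≤
      Real.log ((∑ i ∈ s, z i) / s.card) := by
  have hn0 : 0 < s.card := Finset.card_pos.mpr hs
  have hne : ((s.card : ℝ)) ≠ 0 := Nat.cast_ne_zero.mpr hn0.ne'
  have hprod : 0 < ∏ i ∈ s, z i := Finset.prod_pos hz
  have h := aux_prod_le_pow s z (fun i hi => (hz i hi).le) s.card rfl hn0
  have hlog := Real.log_le_log hprod h
  rw [Real.log_prod (fun i hi => (hz i hi).ne'), Real.log_pow] at hlog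
  calc (1 / (s.card : ℝ)) * ∑ i ∈ s, Real.log (z i)
      ≤ (1 / (s.card : ℝ)) * ((s.card : ℝ) * Real.log ((∑ i ∈ s, z i) / s.card)) :=
        mul_le_mul_of_nonneg_left hlog (by positivity)
  _ = Real.log ((∑ i ∈ s, z i) / s.card) := by field_simp

private lemma aux_trace_eq_sum {n : Type*} [Fintype n] [DecidableEq n]
    {B : Matrix n n ℝ} (hH : B.IsHermitian) :
    B.trace = ∑ i, hH.eigenvalues i := by
  have hU2 : (star (hH.eigenvectorUnitary : Matrix n n ℝ)) *
      (hH.eigenvectorUnitary : Matrix n n ℝ) = 1 :=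
    Matrix.mem_unitaryGroup_iff'.mp hH.eigenvectorUnitary.2
  have hdiag : Matrix.diagonal (RCLike.ofReal ∘ hH.eigenvalues) =
      Matrix.diagonal hH.eigenvalues := by
    rw [RCLike.ofReal_real_eq_id, Function.id_comp]
  conv_lhs => rw [hH.spectral_theorem, Unitary.conjStarAlgAut_apply]
  rw [Matrix.trace_mul_cycle, hU2, Matrix.one_mul, hdiag, Matrix.trace_diagonal]

private lemma aux_det_one_add {n : Type*} [Fintype n] [DecidableEq n]
    {B : Matrix n n ℝ} (hB : B.PosSemidef) :
    1 + B.trace ≤ (1 + B).det := by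
  have hH := hB.1
  have hU1 : (hH.eigenvectorUnitary : Matrix n n ℝ) *
      (star (hH.eigenvectorUnitary : Matrix n n ℝ)) = 1 :=
    Matrix.mem_unitaryGroup_iff.mp hH.eigenvectorUnitary.2
  have hdiag : Matrix.diagonal (RCLike.ofReal ∘ hH.eigenvalues) =
      Matrix.diagonal hH.eigenvalues := by
    rw [RCLike.ofReal_real_eq_id, Function.id_comp]
  have hone : (1 + B) = (hH.eigenvectorUnitary : Matrix n n ℝ) *
      Matrix.diagonal (fun i => 1 + hH.eigenvalues i) *
      (star (hH.eigenvectorUnitary : Matrix n n ℝ)) := by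
    have hd : Matrix.diagonal (fun i => 1 + hH.eigenvalues i) =
        1 + Matrix.diagonal hH.eigenvalues := by
      rw [← Matrix.diagonal_one, ← Matrix.diagonal_add]
    rw [hd, Matrix.mul_add, Matrix.add_mul, Matrix.mul_one, hU1]
    congr 1
    conv_lhs => rw [hH.spectral_theorem, Unitary.conjStarAlgAut_apply, hdiag]
  have hdet : (1 + B).det = ∏ i, (1 + hH.eigenvalues i) := by
    rw [hone, Matrix.det_mul_right_comm, hU1, Matrix.one_mul, Matrix.det_diagonal]
  rw [hdet, aux_trace_eq_sum hH]
  exact aux_one_add_sum_le_prod Finset.univ _ (fun i _ => hB.eigenvalues_nonneg i)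

private lemma aux_det_le_trace_pow {n : Type*} [Fintype n] [DecidableEq n] [Nonempty n]
    {B : Matrix n n ℝ} (hB : B.PosSemidef) :
    B.det ≤ (B.trace / (Fintype.card n : ℝ)) ^ (Fintype.card n) := by
  have hdet : B.det = ∏ i, hB.1.eigenvalues i := by
    simpa using hB.1.det_eq_prod_eigenvalues
  rw [hdet, aux_trace_eq_sum hB.1]
  exact aux_prod_le_pow Finset.univ _ (fun i _ => hB.eigenvalues_nonneg i) _
    (by simp) Fintype.card_pos

open scoped MatrixOrder in
private lemma aux_step {n : Type*} [Fintype n] [DecidableEq n]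
    {A S : Matrix n n ℝ} (hA : A.PosDef) (hS : S.PosSemidef) :
    Real.log A.det + Real.log (1 + (A⁻¹ * S).trace) ≤ Real.log (A + S).det := by
  have hRpsd : Matrix.PosSemidef (CFC.sqrt A) := (CFC.sqrt_nonneg A).posSemidef
  set R := CFC.sqrt A with hRdef
  have hRR : R * R = A := CFC.sqrt_mul_sqrt_self A hA.posSemidef.nonneg
  have hdetA : 0 < A.det := hA.det_pos
  have hdetR : R.det * R.det = A.det := by rw [← Matrix.det_mul, hRR]
  have hRdet0 : R.det ≠ 0 := by
    intro h; rw [h, mul_zero] at hdetR; exact hdetA.ne' hdetR.symm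
  have hRu : IsUnit R.det := isUnit_iff_ne_zero.mpr hRdet0
  have hRi : R * R⁻¹ = 1 := Matrix.mul_nonsing_inv R hRu
  have hiR : R⁻¹ * R = 1 := Matrix.nonsing_inv_mul R hRu
  set B := R⁻¹ * S * R⁻¹ with hBdef
  have hRiH : (R⁻¹).IsHermitian := hRpsd.1.inv
  have hBpsd : B.PosSemidef := by
    have := hS.conjTranspose_mul_mul_same (R⁻¹)
    rwa [hRiH.eq] at this
  have hmid : R * (R⁻¹ * S * R⁻¹) * R = S := by
    simp only [← Matrix.mul_assoc]
    rw [hRi, Matrix.one_mul, Matrix.mul_assoc, hiR, Matrix.mul_one]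
  have hdecomp : A + S = R * (1 + B) * R := by
    rw [Matrix.mul_add, Matrix.mul_one, Matrix.add_mul, hRR, hBdef, hmid]
  have hdet : (A + S).det = A.det * (1 + B).det := by
    rw [hdecomp, Matrix.det_mul, Matrix.det_mul, ← hdetR]; ring
  have htrB : B.trace = (A⁻¹ * S).trace := by
    rw [hBdef, Matrix.trace_mul_cycle, ← Matrix.mul_inv_rev, hRR]
  have htrB0 : 0 ≤ B.trace := by
    rw [aux_trace_eq_sum hBpsd.1]
    exact Finset.sum_nonneg fun i _ => hBpsd.eigenvalues_nonneg i
  have hkey : 1 + B.trace ≤ (1 + B).det := aux_det_one_add hBpsd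
  have hpos1 : (0:ℝ) < 1 + B.trace := by linarith
  have hdetpos : 0 < (A + S).det := (hA.add_posSemidef hS).det_pos
  rw [← htrB, ← Real.log_mul hdetA.ne' hpos1.ne']
  apply Real.log_le_log (by positivity)
  rw [hdet]
  exact mul_le_mul_of_nonneg_left hkey hdetA.le

private lemma aux_psd_vecMulVec {n : Type*} [Fintype n] (v : n → ℝ) :
    (vecMulVec v v).PosSemidef := by
  refine Matrix.posSemidef_iff_dotProduct_mulVec.mpr ⟨?_, ?_⟩
  · ext i j
    simp [Matrix.conjTranspose_apply, Matrix.vecMulVec_apply, mul_comm]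
  · intro x
    have key : dotProduct (star x) ((vecMulVec v v) *ᵥ x) =
        (∑ i, v i * x i) ^ 2 := by
      simp only [Matrix.mulVec, dotProduct, Matrix.vecMulVec_apply, Pi.star_apply,
        star_trivial]
      rw [sq, Finset.sum_mul_sum]
      refine Finset.sum_congr rfl fun i _ => ?_
      rw [Finset.mul_sum]
      exact Finset.sum_congr rfl fun j _ => by ring
    rw [key]
    exact sq_nonneg _

private lemma aux_trace_mul_vecMulVec {n : Type*} [Fintype n] (M : Matrix n n ℝ) (v : n → ℝ) :
    (M * vecMulVec v v).trace = v ⬝ᵥ M.mulVec v := by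
  simp only [Matrix.trace, Matrix.diag, Matrix.mul_apply, Matrix.vecMulVec_apply,
    Matrix.mulVec, dotProduct, Finset.mul_sum]
  exact Finset.sum_congr rfl fun i _ => Finset.sum_congr rfl fun j _ => by ring

private lemma aux_trace_vecMulVec {n : Type*} [Fintype n] (v : n → ℝ) :
    (vecMulVec v v).trace = ∑ i, (v i) ^ 2 := by
  simp [Matrix.trace, Matrix.diag, Matrix.vecMulVec_apply, sq]

/-- Elliptical potential lemma over epochs: with `Λ₁ = λI` (indexed here as `Λ 0`) and
`Λ_{k+1} = Λ_k + Σ_{t ∈ T_k} φ_{k,t} φ_{k,t}ᵀ`, feature vectors of Euclidean norm at most `C`,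
and `T = Σ_k |T_k|`,
`Σ_k (1/|T_k|) Σ_{t ∈ T_k} log(1 + |T_k| ‖φ_{k,t}‖²_{Λ_k⁻¹}) ≤ d log(1 + C² T/(λ d))`. -/
theorem stmt_10 {ι : Type*} [DecidableEq ι] (d K : ℕ) (hd : 1 ≤ d)
    (lam C : ℝ) (hlam : 0 < lam) (hC : 0 < C)
    (Ts : Fin K → Finset ι) (hne : ∀ k, (Ts k).Nonempty)
    (hdisj : ∀ k k', k ≠ k' → Disjoint (Ts k) (Ts k'))
    (φ : Fin K → ι → (Fin d → ℝ))
    (hφ : ∀ k, ∀ t ∈ Ts k, Real.sqrt (∑ i, (φ k t i) ^ 2) ≤ C)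
    (Λ : ℕ → Matrix (Fin d) (Fin d) ℝ)
    (hΛ0 : Λ 0 = lam • (1 : Matrix (Fin d) (Fin d) ℝ))
    (hΛ : ∀ k : Fin K, Λ (k + 1) = Λ k + ∑ t ∈ Ts k, vecMulVec (φ k t) (φ k t))
    (T : ℕ) (hT : T = ∑ k, (Ts k).card) :
    ∑ k : Fin K, (1 / ((Ts k).card : ℝ)) *
        ∑ t ∈ Ts k, Real.log (1 + ((Ts k).card : ℝ) * (φ k t ⬝ᵥ (Λ k)⁻¹.mulVec (φ k t)))
      ≤ (d : ℝ) * Real.log (1 + C ^ 2 * (T : ℝ) / (lam * (d : ℝ))) := by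
  have hdpos : (0:ℝ) < d := by exact_mod_cast hd
  have hd0 : ((d:ℝ)) ≠ 0 := hdpos.ne'
  have : Nonempty (Fin d) := ⟨⟨0, hd⟩⟩
  -- positive definiteness of all Λ m
  have hPD0 : (Λ 0).PosDef := by
    rw [hΛ0, Matrix.smul_one_eq_diagonal]
    exact Matrix.posDef_diagonal_iff.mpr fun _ => hlam
  have hpsdS : ∀ k : Fin K, (∑ t ∈ Ts k, vecMulVec (φ k t) (φ k t)).PosSemidef := by
    intro k
    exact Finset.sum_induction _ _ (fun a b ha hb => ha.add hb) Matrix.PosSemidef.zero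
      (fun t _ => aux_psd_vecMulVec (φ k t))
  have hPDall : ∀ m : ℕ, m ≤ K → (Λ m).PosDef := by
    intro m
    induction m with
    | zero => intro _; exact hPD0
    | succ i ih =>
      intro h
      have hiK : i < K := h
      have heq := hΛ ⟨i, hiK⟩
      rw [heq]
      exact (ih hiK.le).add_posSemidef (hpsdS ⟨i, hiK⟩)
  -- per-epoch bound
  set f : ℕ → ℝ := fun m => Real.log (Λ m).det with hf
  have hstep : ∀ k : Fin K,
      (1 / ((Ts k).card : ℝ)) *
          ∑ t ∈ Ts k, Real.log (1 + ((Ts k).card : ℝ) * (φ k t ⬝ᵥ (Λ k)⁻¹.mulVec (φ k t)))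
        ≤ f (k + 1) - f k := by
    intro k
    have hPDk : (Λ (k:ℕ)).PosDef := hPDall k k.isLt.le
    have hnk : 0 < (Ts k).card := Finset.card_pos.mpr (hne k)
    have hnkR : (0:ℝ) < (Ts k).card := by exact_mod_cast hnk
    set w : ι → ℝ := fun t => φ k t ⬝ᵥ (Λ (k:ℕ))⁻¹.mulVec (φ k t) with hwdef
    have hw0 : ∀ t ∈ Ts k, 0 ≤ w t := by
      intro t _
      have := hPDk.inv.posSemidef.dotProduct_mulVec_nonneg (φ k t)
      simpa [hwdef, star_trivial] using this
    have hz : ∀ t ∈ Ts k, (0:ℝ) < 1 + ((Ts k).card : ℝ) * w t := by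
      intro t ht
      have := hw0 t ht
      nlinarith
    have h1 := aux_avg_log_le (Ts k) (fun t => 1 + ((Ts k).card : ℝ) * w t) hz (hne k)
    have hsum : (∑ t ∈ Ts k, (1 + ((Ts k).card : ℝ) * w t)) / ((Ts k).card : ℝ)
        = 1 + ∑ t ∈ Ts k, w t := by
      rw [Finset.sum_add_distrib, Finset.sum_const, ← Finset.mul_sum]
      field_simp
      ring
    rw [hsum] at h1
    refine h1.trans ?_
    -- second part : log (1 + Σ w) ≤ f (k+1) - f k
    have hSk := hpsdS k
    have h2 := aux_step hPDk hSk
    have htr : ((Λ (k:ℕ))⁻¹ * ∑ t ∈ Ts k, vecMulVec (φ k t) (φ k t)).trace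
        = ∑ t ∈ Ts k, w t := by
      rw [Finset.mul_sum, Matrix.trace_sum]
      exact Finset.sum_congr rfl fun t _ => aux_trace_mul_vecMulVec _ _
    rw [htr, ← hΛ k] at h2
    simp only [hf]
    linarith
  have hmono := Finset.sum_le_sum fun k (_ : k ∈ Finset.univ) => hstep k
  have htele : ∑ k : Fin K, (f (k + 1) - f k) = f K - f 0 := by
    rw [Fin.sum_univ_eq_sum_range (fun i => f (i + 1) - f i) K]
    exact Finset.sum_range_sub f K
  rw [htele] at hmono
  refine hmono.trans ?_
  -- trace telescoping
  set P : ℝ := ∑ k : Fin K, ∑ t ∈ Ts k, ∑ i, (φ k t i) ^ 2 with hP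
  have htrK : (Λ K).trace = lam * d + P := by
    have h1 : ∑ i ∈ Finset.range K, ((Λ (i+1)).trace - (Λ i).trace)
        = (Λ K).trace - (Λ 0).trace := Finset.sum_range_sub (fun i => (Λ i).trace) K
    have h2 : ∑ k : Fin K, ((Λ ((k:ℕ)+1)).trace - (Λ (k:ℕ)).trace)
        = (Λ K).trace - (Λ 0).trace := by
      rw [Fin.sum_univ_eq_sum_range (fun i => (Λ (i+1)).trace - (Λ i).trace) K]
      exact h1
    have h3 : ∀ k : Fin K, (Λ ((k:ℕ)+1)).trace - (Λ (k:ℕ)).trace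
        = ∑ t ∈ Ts k, ∑ i, (φ k t i) ^ 2 := by
      intro k
      rw [hΛ k, Matrix.trace_add, Matrix.trace_sum]
      rw [Finset.sum_congr rfl fun t _ => aux_trace_vecMulVec (φ k t)]
      ring
    have h4 : (Λ 0).trace = lam * d := by
      rw [hΛ0, Matrix.trace_smul, Matrix.trace_one]
      simp [smul_eq_mul]
    rw [Finset.sum_congr rfl (fun k _ => h3 k)] at h2
    rw [← hP] at h2
    linarith [h2, h4.symm ▸ (rfl : (Λ 0).trace = (Λ 0).trace)]
  have hP0 : 0 ≤ P := by
    apply Finset.sum_nonneg; intro k _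
    apply Finset.sum_nonneg; intro t _
    positivity
  have hPle : P ≤ C ^ 2 * T := by
    have hone : ∀ k : Fin K, ∀ t ∈ Ts k, ∑ i, (φ k t i) ^ 2 ≤ C ^ 2 := by
      intro k t ht
      have h0 : 0 ≤ ∑ i, (φ k t i) ^ 2 := by positivity
      have := hφ k t ht
      nlinarith [Real.sq_sqrt h0, Real.sqrt_nonneg (∑ i, (φ k t i) ^ 2)]
    calc P ≤ ∑ k : Fin K, ∑ _t ∈ Ts k, C ^ 2 := by
          apply Finset.sum_le_sum; intro k _
          exact Finset.sum_le_sum (hone k)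
    _ = C ^ 2 * T := by
        simp only [Finset.sum_const, nsmul_eq_mul, hT]
        push_cast
        rw [← Finset.sum_mul]
        ring
  -- final bound
  have hPDK : (Λ K).PosDef := hPDall K le_rfl
  have hfK : f K ≤ (d:ℝ) * Real.log ((Λ K).trace / d) := by
    have h := aux_det_le_trace_pow hPDK.posSemidef
    rw [Fintype.card_fin] at h
    have := Real.log_le_log hPDK.det_pos h
    rwa [Real.log_pow] at this
  have htrpos : 0 < (Λ K).trace := by rw [htrK]; nlinarith
  have hf0 : f 0 = (d:ℝ) * Real.log lam := by
    simp only [hf]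
    rw [hΛ0, Matrix.det_smul, Matrix.det_one, mul_one, Fintype.card_fin, Real.log_pow]
  have hlog2 : Real.log ((Λ K).trace / d) ≤ Real.log ((lam * d + C ^ 2 * T) / d) := by
    apply Real.log_le_log (by positivity)
    gcongr
    rw [htrK]; linarith
  have hfinal : (d:ℝ) * Real.log ((lam * d + C ^ 2 * T) / d) - (d:ℝ) * Real.log lam
      = (d:ℝ) * Real.log (1 + C ^ 2 * (T : ℝ) / (lam * (d : ℝ))) := by
    rw [← mul_sub, ← Real.log_div (by positivity) hlam.ne']
    have heq : (lam * d + C ^ 2 * T) / d / lam = 1 + C ^ 2 * (T:ℝ) / (lam * (d:ℝ)) := by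
      have h1 : (1:ℝ) + C ^ 2 * T / (lam * d) = (lam * d + C ^ 2 * T) / (lam * d) := by
        rw [add_div, div_self (by positivity : (lam * (d:ℝ)) ≠ 0)]
      rw [h1, div_div, mul_comm (d:ℝ) lam]
    rw [heq]
  calc f K - f 0 ≤ (d:ℝ) * Real.log ((Λ K).trace / d) - (d:ℝ) * Real.log lam := by
        rw [hf0]; linarith
  _ ≤ (d:ℝ) * Real.log ((lam * d + C ^ 2 * T) / d) - (d:ℝ) * Real.log lam := by
        have := mul_le_mul_of_nonneg_left hlog2 hdpos.le
        linarith
  _ = (d : ℝ) * Real.log (1 + C ^ 2 * (T : ℝ) / (lam * (d : ℝ))) := hfinal
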